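/- Let R be a commutative ring, G a group acting on a finite set F by a permutation A : F → F with cycles c₁, …, cₙ of lengths k₁, …, kₙ. Suppose M is the R[G]-module presented by the free module R[G]^F modulo the relations f + A(f) = 0 for all f ∈ F, where lifting around the cycle cᵢ returns the chosen generator multiplied by a group element gᵢ ∈ G. Then M is isomorphic as an R[G]-module to the direct sum ⊕ᵢ R[G]/(1 + (−1)^{kᵢ+1} gᵢ), and consequently the determinant of the presentation matrix equals ∏ᵢ (1 + (−1)^{kᵢ+1} gᵢ) up to a unit of R[G]. -/

import Mathlib

open scoped BigOperators DirectSum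

section Cycle

variable (R : Type) [CommRing R] (G : Type) [CommGroup G]

lemma shift_pow (m : ℕ) (t : ℕ) (x : ZMod m) :
    ((Equiv.addRight (1 : ZMod m)) ^ t) x = x + t := by
  induction t generalizing x with
  | zero => simp
  | succ t ih =>
    rw [pow_succ, Equiv.Perm.mul_apply]
    have : (Equiv.addRight (1 : ZMod m)) x = x + 1 := rfl
    rw [this, ih]
    push_cast
    ring

lemma cycle_det (m : ℕ) [NeZero m] (w : ZMod m → G) :
    (1 + Matrix.of (fun j' j => if j' = j + 1 then (MonoidAlgebra.of R G) (w j) else 0)).det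
      = 1 - (-1 : MonoidAlgebra R G) ^ m * MonoidAlgebra.of R G (∏ j : ZMod m, w j) := by
  by_cases hm : m = 1
  · subst hm
    rw [Matrix.det_unique]
    have h1 : (default : ZMod 1) = default + 1 := Subsingleton.elim _ _
    simp only [Matrix.add_apply, Matrix.one_apply_eq, Matrix.of_apply, if_pos h1]
    rw [Fintype.prod_unique]
    split_ifs with hh
    · ring
    · exact absurd (Subsingleton.elim _ _) hh
  · have hm2 : 1 < m := lt_of_le_of_ne (Nat.one_le_iff_ne_zero.2 (NeZero.ne m)) (Ne.symm hm)
    haveI : Fact (1 < m) := ⟨hm2⟩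
    set σc : Equiv.Perm (ZMod m) := Equiv.addRight 1 with hσc
    have happ : ∀ x : ZMod m, σc x = x + 1 := fun x => rfl
    have hne : (1 : Equiv.Perm (ZMod m)) ≠ σc := by
      intro h
      have h0 := congrArg (fun σ : Equiv.Perm (ZMod m) => σ 0) h
      simp [happ] at h0
    have hcyc : σc.IsCycle := by
      refine ⟨0, by simp [happ], fun y hy => ?_⟩
      refine ⟨(y.val : ℤ), ?_⟩
      rw [zpow_natCast, shift_pow]
      simp [ZMod.natCast_rightInverse y]
    have hsupp : σc.support = Finset.univ := by
      ext y
      simp [Equiv.Perm.mem_support, happ]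
    have hsign : Equiv.Perm.sign σc = (-1 : ℤˣ) ^ (m + 1) := by
      rw [hcyc.sign, hsupp, Finset.card_univ, ZMod.card, pow_succ]
      simp
    rw [Matrix.det_apply]
    have hvanish : ∀ σ ∈ Finset.univ, σ ∉ ({1, σc} : Finset (Equiv.Perm (ZMod m))) →
        Equiv.Perm.sign σ •
          (∏ j : ZMod m, (1 + Matrix.of (fun j' j => if j' = j + 1 then
            (MonoidAlgebra.of R G) (w j) else 0)) (σ j) j) = 0 := by
      intro σ _ hσ
      have hj : ∃ j : ZMod m, σ j ≠ j ∧ σ j ≠ j + 1 := by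
        by_contra hall
        push_neg at hall
        apply hσ
        have hor : σ = 1 ∨ σ = σc := by
          by_cases hfix : ∀ j, σ j = j
          · exact Or.inl (Equiv.ext hfix)
          · push_neg at hfix
            obtain ⟨j₀, hj₀⟩ := hfix
            have hj₀' : σ j₀ = j₀ + 1 := hall j₀ hj₀
            have key : ∀ t : ℕ, σ (j₀ + t) = j₀ + t + 1 := by
              intro t
              induction t with
              | zero => simpa using hj₀'
              | succ t ih =>
                rcases eq_or_ne (σ (j₀ + t + 1)) (j₀ + t + 1) with h2 | h2
                · exfalso
                  have h3 := σ.injective (ih.trans h2.symm)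
                  simp [left_eq_add] at h3
                · have h4 := hall _ h2
                  push_cast
                  rw [← add_assoc]
                  exact h4
            right
            ext y
            have hy : y = j₀ + (((y - j₀).val : ℕ) : ZMod m) := by
              rw [ZMod.natCast_rightInverse (y - j₀)]
              ring
            rw [happ, hy, key]
        rcases hor with h | h <;> simp [h]
      obtain ⟨j, hj⟩ := hj
      rw [Finset.prod_eq_zero (Finset.mem_univ j), smul_zero]
      simp [Matrix.add_apply, Matrix.one_apply, hj.1, hj.2]
    rw [← Finset.sum_subset (Finset.subset_univ ({1, σc} : Finset (Equiv.Perm (ZMod m))))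
      (fun σ _ h => hvanish σ (Finset.mem_univ σ) h)]
    rw [Finset.sum_pair hne]
    have hterm1 : ∀ j : ZMod m, (1 + Matrix.of (fun j' j => if j' = j + 1 then
        (MonoidAlgebra.of R G) (w j) else 0)) ((1 : Equiv.Perm (ZMod m)) j) j = 1 := by
      intro j
      have h5 : ¬ (j = j + 1) := by simp [left_eq_add]
      simp [Matrix.add_apply, Matrix.one_apply, h5]
    have hterm2 : ∀ j : ZMod m, (1 + Matrix.of (fun j' j => if j' = j + 1 then
        (MonoidAlgebra.of R G) (w j) else 0)) (σc j) j = MonoidAlgebra.of R G (w j) := by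
      intro j
      have h6 : ¬ (j + 1 = j) := by simp [add_eq_left]
      simp [happ, Matrix.add_apply, Matrix.one_apply, h6]
    simp only [hterm1, hterm2, Finset.prod_const_one, map_one, one_smul]
    rw [← map_prod (MonoidAlgebra.of R G) w Finset.univ, hsign]
    have h7 : (((-1 : ℤˣ) ^ (m + 1) : ℤˣ) : ℤ) = (-1 : ℤ) ^ (m + 1) := by push_cast; ring
    rw [Units.smul_def, h7, zsmul_eq_mul]
    push_cast
    ring

end Cycle

section Blocks

variable (R : Type) [CommRing R] (G : Type) [CommGroup G]

/-- The global presentation matrix. -/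
noncomputable def Lmat (n : ℕ) (k : Fin n → ℕ) (a : (Σ i : Fin n, ZMod (k i)) → G) :
    Matrix (Σ i : Fin n, ZMod (k i)) (Σ i : Fin n, ZMod (k i)) (MonoidAlgebra R G) :=
  1 + Matrix.of (fun f' f => if f' = (⟨f.1, f.2 + 1⟩ : Σ i : Fin n, ZMod (k i)) then
    MonoidAlgebra.of R G (a f) else 0)

def sigmaSuccEquiv (n : ℕ) (k : Fin (n + 1) → ℕ) :
    (Σ i : Fin (n + 1), ZMod (k i)) ≃ (ZMod (k 0) ⊕ Σ i : Fin n, ZMod (k i.succ)) where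
  toFun x := Fin.cases (motive := fun i => ZMod (k i) → (ZMod (k 0) ⊕ Σ i : Fin n, ZMod (k i.succ)))
    (fun j => Sum.inl j) (fun i j => Sum.inr ⟨i, j⟩) x.1 x.2
  invFun := Sum.elim (fun j => ⟨0, j⟩) (fun y => ⟨y.1.succ, y.2⟩)
  left_inv := by rintro ⟨i, j⟩; induction i using Fin.cases <;> simp
  right_inv := by rintro (j | ⟨i, j⟩) <;> simp

lemma det_Lmat : ∀ (n : ℕ) (k : Fin n → ℕ) [∀ i, NeZero (k i)]
    (a : (Σ i : Fin n, ZMod (k i)) → G),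
    (Lmat R G n k a).det =
      ∏ i, (1 - (-1 : MonoidAlgebra R G) ^ (k i) *
        MonoidAlgebra.of R G (∏ j : ZMod (k i), a ⟨i, j⟩)) := by
  intro n
  induction n with
  | zero =>
    intro k _ a
    rw [Matrix.det_isEmpty]
    simp
  | succ n IH =>
    intro k _ a
    set e := sigmaSuccEquiv n k
    rw [← Matrix.det_reindex_self e (Lmat R G (n + 1) k a)]
    have hblock : Matrix.reindex e e (Lmat R G (n + 1) k a) =
        Matrix.fromBlocks
          (1 + Matrix.of (fun j' j => if j' = j + 1 then
            MonoidAlgebra.of R G (a ⟨0, j⟩) else 0))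
          0 0
          (Lmat R G n (fun i => k i.succ) (fun y => a ⟨y.1.succ, y.2⟩)) := by
      apply Matrix.ext
      rintro (j | ⟨i, j⟩) (j' | ⟨i', j'⟩)
      · -- inl inl
        simp only [Matrix.reindex_apply, Matrix.submatrix_apply, Matrix.fromBlocks_apply₁₁]
        show Lmat R G (n+1) k a ⟨0, j⟩ ⟨0, j'⟩ = _
        simp only [Lmat, Matrix.add_apply, Matrix.one_apply, Matrix.of_apply]
        congr 1
        · simp [Sigma.mk.inj_iff]
        · simp [Sigma.mk.inj_iff]
      · simp only [Matrix.reindex_apply, Matrix.submatrix_apply, Matrix.fromBlocks_apply₁₂]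
        show Lmat R G (n+1) k a ⟨0, j⟩ ⟨i'.succ, j'⟩ = 0
        simp [Lmat, Matrix.add_apply, Matrix.one_apply, Sigma.mk.inj_iff,
          (Fin.succ_ne_zero i').symm, Matrix.zero_apply]
      · simp only [Matrix.reindex_apply, Matrix.submatrix_apply, Matrix.fromBlocks_apply₂₁]
        show Lmat R G (n+1) k a ⟨i.succ, j⟩ ⟨0, j'⟩ = 0
        simp [Lmat, Matrix.add_apply, Matrix.one_apply, Sigma.mk.inj_iff, Fin.succ_ne_zero i]
      · simp only [Matrix.reindex_apply, Matrix.submatrix_apply, Matrix.fromBlocks_apply₂₂]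
        show Lmat R G (n+1) k a ⟨i.succ, j⟩ ⟨i'.succ, j'⟩ = _
        simp only [Lmat, Matrix.add_apply, Matrix.one_apply, Matrix.of_apply]
        have key : ∀ (j : ZMod (k i.succ)) (j' : ZMod (k i'.succ)),
            ((⟨i.succ, j⟩ : Σ l : Fin (n+1), ZMod (k l)) = ⟨i'.succ, j'⟩) ↔
            ((⟨i, j⟩ : Σ l : Fin n, ZMod (k l.succ)) = ⟨i', j'⟩) := by
          intro j j'
          constructor
          · intro h
            obtain ⟨h1, h2⟩ := Sigma.mk.inj_iff.mp h
            obtain rfl : i = i' := Fin.succ_injective _ h1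
            exact Sigma.mk.inj_iff.mpr ⟨rfl, h2⟩
          · intro h
            obtain ⟨h1, h2⟩ := Sigma.mk.inj_iff.mp h
            obtain rfl : i = i' := h1
            exact Sigma.mk.inj_iff.mpr ⟨rfl, h2⟩
        congr 1
        · exact if_congr (key j j') rfl rfl
        · exact if_congr (key j (j' + 1)) rfl rfl
    rw [hblock, Matrix.det_fromBlocks_zero₁₂, cycle_det R G (k 0) (fun j => a ⟨0, j⟩),
      IH (fun i => k i.succ) (fun y => a ⟨y.1.succ, y.2⟩), Fin.prod_univ_succ]

end Blocks

section ModulePart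

variable (R : Type) [CommRing R] (G : Type) [CommGroup G]
variable {n : ℕ} (k : Fin n → ℕ) [∀ i, NeZero (k i)]
variable (a : (Σ i : Fin n, ZMod (k i)) → G)

def bG (i : Fin n) (t : ℕ) : G := a ⟨i, (t : ZMod (k i))⟩

def pG (i : Fin n) (t : ℕ) : G := ∏ s ∈ Finset.range t, bG G k a i s

noncomputable def cS (i : Fin n) (t : ℕ) : MonoidAlgebra R G :=
  (-1) ^ t * MonoidAlgebra.of R G ((pG G k a i t)⁻¹)

noncomputable def dS (i : Fin n) (t : ℕ) : MonoidAlgebra R G :=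
  (-1) ^ t * MonoidAlgebra.of R G (pG G k a i t)

noncomputable def Iid (i : Fin n) : Ideal (MonoidAlgebra R G) :=
  Ideal.span {(1 : MonoidAlgebra R G) + ((-1 : ℤ) ^ (k i + 1)) •
    MonoidAlgebra.of R G (∏ j : ZMod (k i), a ⟨i, j⟩)}

noncomputable def genS (i : Fin n) : MonoidAlgebra R G :=
  1 - (-1) ^ (k i) * MonoidAlgebra.of R G (pG G k a i (k i))

lemma pG_top (i : Fin n) : pG G k a i (k i) = ∏ j : ZMod (k i), a ⟨i, j⟩ := by
  unfold pG
  rw [← Fin.prod_univ_eq_prod_range (fun t => bG G k a i t) (k i)]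
  refine Finset.prod_nbij' (fun t => ((t : ℕ) : ZMod (k i)))
    (fun j => (⟨j.val, ZMod.val_lt j⟩ : Fin (k i)))
    (fun _ _ => Finset.mem_univ _) (fun _ _ => Finset.mem_univ _) ?_ ?_ ?_
  · intro t _
    exact Fin.ext (ZMod.val_cast_of_lt t.isLt)
  · intro j _
    exact ZMod.natCast_rightInverse j
  · intro t _
    rfl

lemma Iid_eq (i : Fin n) : Iid R G k a i = Ideal.span {genS R G k a i} := by
  have hx : (1 : MonoidAlgebra R G) + ((-1 : ℤ) ^ (k i + 1)) •
      MonoidAlgebra.of R G (∏ j : ZMod (k i), a ⟨i, j⟩) = genS R G k a i := by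
    unfold genS
    rw [pG_top, zsmul_eq_mul]
    push_cast
    ring
  unfold Iid
  rw [hx]

lemma col_eq (f : Σ i : Fin n, ZMod (k i)) :
    (Lmat R G n k a).mulVecLin (Pi.single f (1 : MonoidAlgebra R G)) =
      Pi.single f 1 + (MonoidAlgebra.of R G (a f)) •
        (Pi.single (⟨f.1, f.2 + 1⟩ : Σ i : Fin n, ZMod (k i)) (1 : MonoidAlgebra R G) :
          (Σ i : Fin n, ZMod (k i)) → MonoidAlgebra R G) := by
  funext f'
  simp only [Matrix.mulVecLin_apply, Matrix.mulVec_single, mul_one, Lmat, Matrix.add_apply,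
    Matrix.one_apply, Matrix.of_apply, Pi.add_apply, Pi.smul_apply, Pi.single_apply,
    smul_eq_mul, mul_ite, mul_one, mul_zero, MulOpposite.op_one, one_smul, Matrix.col_apply]

lemma gen_mem (i : Fin n) :
    genS R G k a i • (Pi.single (⟨i, 0⟩ : Σ i : Fin n, ZMod (k i)) (1 : MonoidAlgebra R G) :
        (Σ i : Fin n, ZMod (k i)) → MonoidAlgebra R G) ∈
      LinearMap.range (Lmat R G n k a).mulVecLin := by
  have hterm : ∀ t : ℕ,
      dS R G k a i t • (Pi.single (⟨i, ((t : ℕ) : ZMod (k i))⟩ : Σ i : Fin n, ZMod (k i))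
          (1 : MonoidAlgebra R G) : (Σ i : Fin n, ZMod (k i)) → MonoidAlgebra R G)
        - dS R G k a i (t + 1) •
            (Pi.single (⟨i, ((t + 1 : ℕ) : ZMod (k i))⟩ : Σ i : Fin n, ZMod (k i)) 1 :
              (Σ i : Fin n, ZMod (k i)) → MonoidAlgebra R G)
      = dS R G k a i t •
          (Lmat R G n k a).mulVecLin (Pi.single ⟨i, ((t : ℕ) : ZMod (k i))⟩ 1) := by
    intro t
    rw [col_eq, smul_add, smul_smul]
    have hb : a (⟨i, ((t : ℕ) : ZMod (k i))⟩ : Σ i : Fin n, ZMod (k i)) = bG G k a i t := rfl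
    have hd : dS R G k a i t * MonoidAlgebra.of R G (bG G k a i t) = - dS R G k a i (t + 1) := by
      unfold dS pG
      rw [Finset.prod_range_succ, map_mul]
      ring
    have hcast : ((t : ℕ) : ZMod (k i)) + 1 = ((t + 1 : ℕ) : ZMod (k i)) := by push_cast; ring
    rw [hb, hd, hcast, neg_smul, sub_eq_add_neg]
  have hsum := Finset.sum_range_sub'
    (fun t => dS R G k a i t •
      (Pi.single (⟨i, ((t : ℕ) : ZMod (k i))⟩ : Σ i : Fin n, ZMod (k i))
        (1 : MonoidAlgebra R G) : (Σ i : Fin n, ZMod (k i)) → MonoidAlgebra R G)) (k i)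
  have hd0 : dS R G k a i 0 = 1 := by
    unfold dS pG
    rw [Finset.prod_range_zero, pow_zero, one_mul]
    exact map_one (MonoidAlgebra.of R G)
  have key : genS R G k a i •
      (Pi.single (⟨i, 0⟩ : Σ i : Fin n, ZMod (k i)) (1 : MonoidAlgebra R G) :
        (Σ i : Fin n, ZMod (k i)) → MonoidAlgebra R G)
      = ∑ t ∈ Finset.range (k i), dS R G k a i t •
          (Lmat R G n k a).mulVecLin (Pi.single ⟨i, ((t : ℕ) : ZMod (k i))⟩ 1) := by
    rw [← Finset.sum_congr rfl (fun t _ => hterm t), hsum, hd0, one_smul]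
    rw [show (((k i : ℕ)) : ZMod (k i)) = 0 from ZMod.natCast_self (k i)]
    rw [show (((0 : ℕ)) : ZMod (k i)) = 0 from Nat.cast_zero]
    unfold genS dS
    rw [sub_smul, one_smul]
  rw [key]
  exact Submodule.sum_mem _ (fun t _ =>
    Submodule.smul_mem _ _ (LinearMap.mem_range_self _ _))

lemma val_add_one' {m : ℕ} [NeZero m] (j : ZMod m) : (j + 1).val = (j.val + 1) % m := by
  rw [ZMod.val_add, ZMod.val_one_eq_one_mod]
  conv_rhs => rw [Nat.add_mod]
  rw [Nat.add_mod j.val (1 % m) m, Nat.mod_mod_of_dvd 1 dvd_rfl]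

lemma cocycle (i : Fin n) (j : ZMod (k i)) :
    cS R G k a i j.val + MonoidAlgebra.of R G (a ⟨i, j⟩) * cS R G k a i ((j + 1).val)
      ∈ Iid R G k a i := by
  rw [Iid_eq]
  have hb : a (⟨i, j⟩ : Σ i : Fin n, ZMod (k i)) = bG G k a i j.val := by
    unfold bG
    congr 1
    exact Sigma.ext rfl (heq_of_eq (ZMod.natCast_rightInverse j).symm)
  rcases lt_or_eq_of_le (Nat.succ_le_of_lt (ZMod.val_lt j)) with h | h
  · -- j.val + 1 < k i
    have hv : (j + 1).val = j.val + 1 := by rw [val_add_one', Nat.mod_eq_of_lt h]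
    rw [hv, hb]
    have hgb : MonoidAlgebra.of R G (bG G k a i j.val) *
        MonoidAlgebra.of R G ((pG G k a i (j.val + 1))⁻¹)
        = MonoidAlgebra.of R G ((pG G k a i j.val)⁻¹) := by
      rw [← map_mul]
      congr 1
      unfold pG
      rw [Finset.prod_range_succ]
      group
    have hzero : cS R G k a i j.val + MonoidAlgebra.of R G (bG G k a i j.val) *
        cS R G k a i (j.val + 1) = 0 := by
      unfold cS
      linear_combination ((-1 : MonoidAlgebra R G) ^ (j.val + 1)) * hgb
    rw [hzero]
    exact Ideal.zero_mem _
  · -- j.val + 1 = k i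
    have h' : j.val + 1 = k i := h
    have hv : (j + 1).val = 0 := by rw [val_add_one', h', Nat.mod_self]
    have hc0 : cS R G k a i 0 = 1 := by
      unfold cS pG
      rw [Finset.prod_range_zero, pow_zero, one_mul, inv_one]
      exact map_one (MonoidAlgebra.of R G)
    rw [hv, hc0, mul_one, hb]
    refine Ideal.mem_span_singleton.2 ⟨(-1) ^ j.val *
      MonoidAlgebra.of R G ((pG G k a i j.val)⁻¹), ?_⟩
    have hsplit : pG G k a i (k i) = pG G k a i j.val * bG G k a i j.val := by
      have hps := Finset.prod_range_succ (bG G k a i) j.val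
      rw [h'] at hps
      exact hps
    have hgb : MonoidAlgebra.of R G (pG G k a i j.val * bG G k a i j.val) *
        MonoidAlgebra.of R G ((pG G k a i j.val)⁻¹)
        = MonoidAlgebra.of R G (bG G k a i j.val) := by
      rw [← map_mul]
      congr 1
      rw [mul_comm (pG G k a i j.val) (bG G k a i j.val), mul_assoc, mul_inv_cancel, mul_one]
    have heven : (-1 : MonoidAlgebra R G) ^ j.val * (-1) ^ j.val = 1 := by
      rw [← pow_add]
      exact Even.neg_one_pow ⟨j.val, rfl⟩
    have hpow : (-1 : MonoidAlgebra R G) ^ (k i) = (-1) ^ (j.val + 1) := by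
      rw [h']
    unfold genS cS
    rw [hsplit, hpow]
    linear_combination (-1 : MonoidAlgebra R G) * hgb -
      (MonoidAlgebra.of R G (pG G k a i j.val * bG G k a i j.val) *
        MonoidAlgebra.of R G ((pG G k a i j.val)⁻¹)) * heven

lemma descend (i : Fin n) (j : ZMod (k i)) :
    Pi.single (⟨i, j⟩ : Σ i : Fin n, ZMod (k i)) (1 : MonoidAlgebra R G)
        - cS R G k a i j.val • (Pi.single (⟨i, 0⟩ : Σ i : Fin n, ZMod (k i)) 1 :
            (Σ i : Fin n, ZMod (k i)) → MonoidAlgebra R G)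
      ∈ LinearMap.range (Lmat R G n k a).mulVecLin := by
  suffices h : ∀ t : ℕ, t < k i →
      Pi.single (⟨i, ((t : ℕ) : ZMod (k i))⟩ : Σ i : Fin n, ZMod (k i)) (1 : MonoidAlgebra R G)
          - cS R G k a i t • (Pi.single (⟨i, 0⟩ : Σ i : Fin n, ZMod (k i)) 1 :
              (Σ i : Fin n, ZMod (k i)) → MonoidAlgebra R G)
        ∈ LinearMap.range (Lmat R G n k a).mulVecLin by
    have h2 := h j.val (ZMod.val_lt j)
    rwa [show (((j.val : ℕ)) : ZMod (k i)) = j from ZMod.natCast_rightInverse j] at h2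
  intro t
  induction t with
  | zero =>
    intro _
    have hc0 : cS R G k a i 0 = 1 := by
      unfold cS pG
      rw [Finset.prod_range_zero, pow_zero, one_mul, inv_one]
      exact map_one (MonoidAlgebra.of R G)
    simp only [Nat.cast_zero, hc0, one_smul, sub_self]
    exact Submodule.zero_mem _
  | succ t IH =>
    intro ht
    have hIH := IH (Nat.lt_of_succ_lt ht)
    have hcol : (Lmat R G n k a).mulVecLin
        (Pi.single (⟨i, ((t : ℕ) : ZMod (k i))⟩ : Σ i : Fin n, ZMod (k i)) 1)
        = Pi.single (⟨i, ((t : ℕ) : ZMod (k i))⟩ : Σ i : Fin n, ZMod (k i)) 1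
          + MonoidAlgebra.of R G (bG G k a i t) •
            (Pi.single (⟨i, ((t + 1 : ℕ) : ZMod (k i))⟩ : Σ i : Fin n, ZMod (k i)) 1 :
              (Σ i : Fin n, ZMod (k i)) → MonoidAlgebra R G) := by
      rw [col_eq]
      have hcast : ((t : ℕ) : ZMod (k i)) + 1 = ((t + 1 : ℕ) : ZMod (k i)) := by
        push_cast; ring
      rw [hcast]
      rfl
    have hbb : MonoidAlgebra.of R G ((bG G k a i t)⁻¹) * MonoidAlgebra.of R G (bG G k a i t)
        = 1 := by
      rw [← map_mul, inv_mul_cancel, map_one]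
    have hcc : cS R G k a i (t + 1)
        = -(MonoidAlgebra.of R G ((bG G k a i t)⁻¹) * cS R G k a i t) := by
      unfold cS pG
      rw [Finset.prod_range_succ, mul_inv, map_mul]
      ring
    have key : Pi.single (⟨i, ((t + 1 : ℕ) : ZMod (k i))⟩ : Σ i : Fin n, ZMod (k i))
          (1 : MonoidAlgebra R G)
          - cS R G k a i (t + 1) • (Pi.single (⟨i, 0⟩ : Σ i : Fin n, ZMod (k i)) 1 :
              (Σ i : Fin n, ZMod (k i)) → MonoidAlgebra R G)
        = MonoidAlgebra.of R G ((bG G k a i t)⁻¹) •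
            (Lmat R G n k a).mulVecLin
              (Pi.single (⟨i, ((t : ℕ) : ZMod (k i))⟩ : Σ i : Fin n, ZMod (k i)) 1)
          - MonoidAlgebra.of R G ((bG G k a i t)⁻¹) •
            (Pi.single (⟨i, ((t : ℕ) : ZMod (k i))⟩ : Σ i : Fin n, ZMod (k i)) 1
              - cS R G k a i t • (Pi.single (⟨i, 0⟩ : Σ i : Fin n, ZMod (k i)) 1 :
                  (Σ i : Fin n, ZMod (k i)) → MonoidAlgebra R G)) := by
      rw [hcol, hcc]
      match_scalars
      all_goals try ring
      all_goals exact hbb.symm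
    rw [key]
    exact Submodule.sub_mem _
      (Submodule.smul_mem _ _ (LinearMap.mem_range_self _ _))
      (Submodule.smul_mem _ _ hIH)

noncomputable def Phi : ((Σ i : Fin n, ZMod (k i)) → MonoidAlgebra R G) →ₗ[MonoidAlgebra R G]
    ⨁ i : Fin n, (MonoidAlgebra R G ⧸ Iid R G k a i) :=
  ∑ f : (Σ i : Fin n, ZMod (k i)), cS R G k a f.1 f.2.val •
    ((DirectSum.lof (MonoidAlgebra R G) (Fin n) (fun i => MonoidAlgebra R G ⧸ Iid R G k a i) f.1)
      ∘ₗ (Iid R G k a f.1).mkQ ∘ₗ LinearMap.proj f)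

lemma Phi_single (f : Σ i : Fin n, ZMod (k i)) (r : MonoidAlgebra R G) :
    Phi R G k a (Pi.single f r) =
      DirectSum.lof (MonoidAlgebra R G) (Fin n) (fun i => MonoidAlgebra R G ⧸ Iid R G k a i) f.1
        (Submodule.Quotient.mk (cS R G k a f.1 f.2.val * r)) := by
  unfold Phi
  rw [LinearMap.sum_apply, Finset.sum_eq_single f]
  · rw [LinearMap.smul_apply, LinearMap.comp_apply, LinearMap.comp_apply,
      LinearMap.proj_apply, Pi.single_eq_same, Submodule.mkQ_apply, ← map_smul,
      ← Submodule.Quotient.mk_smul, smul_eq_mul]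
  · intro f' _ hne
    rw [LinearMap.smul_apply, LinearMap.comp_apply, LinearMap.comp_apply,
      LinearMap.proj_apply, Pi.single_eq_of_ne hne, map_zero, map_zero, smul_zero]
  · intro h
    exact absurd (Finset.mem_univ f) h

lemma Phi_ker : LinearMap.range (Lmat R G n k a).mulVecLin ≤
    LinearMap.ker (Phi R G k a) := by
  rw [Matrix.range_mulVecLin, Submodule.span_le]
  rintro x ⟨f, rfl⟩
  simp only [SetLike.mem_coe, LinearMap.mem_ker]
  have hcol : (Lmat R G n k a).col f = (Lmat R G n k a).mulVecLin (Pi.single f 1) := by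
    funext f'
    simp [Matrix.transpose_apply, Matrix.mulVecLin_apply, Matrix.mulVec_single]
  rw [hcol, col_eq, map_add, map_smul, Phi_single, Phi_single]
  obtain ⟨i, j⟩ := f
  rw [← map_smul, ← map_add]
  have hmem := cocycle R G k a i j
  rw [mul_one, mul_one, ← Submodule.Quotient.mk_smul, smul_eq_mul, ← Submodule.Quotient.mk_add,
    (Submodule.Quotient.mk_eq_zero _).2 hmem, map_zero]

noncomputable def PsiAux (i : Fin n) : (MonoidAlgebra R G) →ₗ[MonoidAlgebra R G]
    (((Σ i : Fin n, ZMod (k i)) → MonoidAlgebra R G) ⧸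
      LinearMap.range (Lmat R G n k a).mulVecLin) :=
  (LinearMap.range (Lmat R G n k a).mulVecLin).mkQ ∘ₗ
    LinearMap.toSpanSingleton (MonoidAlgebra R G) _
      (Pi.single (⟨i, 0⟩ : Σ i : Fin n, ZMod (k i)) 1)

lemma PsiAux_ker (i : Fin n) : Iid R G k a i ≤ LinearMap.ker (PsiAux R G k a i) := by
  rw [Iid_eq, Ideal.span_le]
  rw [Set.singleton_subset_iff]
  simp only [SetLike.mem_coe, LinearMap.mem_ker]
  unfold PsiAux
  rw [LinearMap.comp_apply, LinearMap.toSpanSingleton_apply, Submodule.mkQ_apply]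
  exact (Submodule.Quotient.mk_eq_zero _).2 (gen_mem R G k a i)

noncomputable def Psi : (⨁ i : Fin n, (MonoidAlgebra R G ⧸ Iid R G k a i)) →ₗ[MonoidAlgebra R G]
    (((Σ i : Fin n, ZMod (k i)) → MonoidAlgebra R G) ⧸
      LinearMap.range (Lmat R G n k a).mulVecLin) :=
  DirectSum.toModule (MonoidAlgebra R G) (Fin n) _
    (fun i => (Iid R G k a i).liftQ (PsiAux R G k a i) (PsiAux_ker R G k a i))

noncomputable def PhiBar : (((Σ i : Fin n, ZMod (k i)) → MonoidAlgebra R G) ⧸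
      LinearMap.range (Lmat R G n k a).mulVecLin) →ₗ[MonoidAlgebra R G]
    ⨁ i : Fin n, (MonoidAlgebra R G ⧸ Iid R G k a i) :=
  (LinearMap.range (Lmat R G n k a).mulVecLin).liftQ
    (M₂ := ⨁ i : Fin n, (MonoidAlgebra R G ⧸ Iid R G k a i)) (Phi R G k a) (Phi_ker R G k a)

lemma eq1 : (PhiBar R G k a) ∘ₗ (Psi R G k a) = LinearMap.id := by
  apply DirectSum.linearMap_ext
  intro i
  apply Submodule.linearMap_qext (M₂ := ⨁ i : Fin n, (MonoidAlgebra R G ⧸ Iid R G k a i))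
  apply LinearMap.ext_ring
  have hc0 : cS R G k a i (0 : ZMod (k i)).val = 1 := by
    rw [ZMod.val_zero]
    unfold cS pG
    rw [Finset.prod_range_zero, pow_zero, one_mul, inv_one]
    exact map_one (MonoidAlgebra.of R G)
  simp only [LinearMap.comp_apply, Submodule.mkQ_apply, LinearMap.id_apply]
  unfold Psi
  rw [DirectSum.toModule_lof, Submodule.liftQ_apply]
  unfold PsiAux PhiBar
  rw [LinearMap.comp_apply, LinearMap.toSpanSingleton_apply, one_smul, Submodule.mkQ_apply,
    Submodule.liftQ_apply, Phi_single, hc0, one_mul]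

lemma eq2 : (Psi R G k a) ∘ₗ (PhiBar R G k a) = LinearMap.id := by
  apply Submodule.linearMap_qext
  apply LinearMap.pi_ext'
  intro f
  apply LinearMap.ext_ring
  obtain ⟨i, j⟩ := f
  simp only [LinearMap.comp_apply, LinearMap.coe_single, Submodule.mkQ_apply,
    LinearMap.id_apply]
  unfold PhiBar
  rw [Submodule.liftQ_apply, Phi_single, mul_one]
  dsimp only
  unfold Psi
  rw [DirectSum.toModule_lof, Submodule.liftQ_apply]
  unfold PsiAux
  rw [LinearMap.comp_apply, LinearMap.toSpanSingleton_apply, Submodule.mkQ_apply,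
    Submodule.Quotient.eq]
  have hmem := Submodule.neg_mem _ (descend R G k a i j)
  rwa [neg_sub] at hmem

end ModulePart

/-- Let `R` be a commutative ring and `G` a (commutative)
group.  Consider a permutation `A` of a finite set `F`, given in cycle normal
form: `F = Σ i : Fin n, ZMod (k i)` with `A ⟨i, j⟩ = ⟨i, j + 1⟩`, and a labeling
`a : F → G`.  Let `M` be the `R[G]`-module presented by `R[G]^F` modulo the
relations `f + a(f)·A(f) = 0`, i.e. the cokernel of the matrix `L = I + P`
where `P (A f) f = a f`.  Let `gᵢ ∈ G` be the product of the labels around the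
`i`-th cycle.  Then `M ≅ ⊕ᵢ R[G]/(1 + (-1)^{kᵢ+1} gᵢ)` and, consequently,
`det L = ∏ᵢ (1 + (-1)^{kᵢ+1} gᵢ)` up to a unit of `R[G]`. -/
theorem veering_AB_module_decomposition
    (R : Type) [CommRing R] (G : Type) [CommGroup G]
    (n : ℕ) (k : Fin n → ℕ) [∀ i, NeZero (k i)]
    (a : (Σ i : Fin n, ZMod (k i)) → G) :
    let S := MonoidAlgebra R G
    let F := Σ i : Fin n, ZMod (k i)
    let A : F → F := fun x => ⟨x.1, x.2 + 1⟩
    let L : Matrix F F S :=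
      1 + Matrix.of (fun f' f => if f' = A f then MonoidAlgebra.of R G (a f) else 0)
    let g : Fin n → G := fun i => ∏ j : ZMod (k i), a ⟨i, j⟩
    Nonempty (((F → S) ⧸ LinearMap.range L.mulVecLin) ≃ₗ[S]
        (⨁ i : Fin n, S ⧸ Ideal.span
          {(1 : S) + ((-1 : ℤ) ^ (k i + 1)) • MonoidAlgebra.of R G (g i)})) ∧
    ∃ u : Sˣ, L.det =
      (u : S) * ∏ i, ((1 : S) + ((-1 : ℤ) ^ (k i + 1)) • MonoidAlgebra.of R G (g i)) := by
  intro S F A L g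
  constructor
  · exact ⟨LinearEquiv.ofLinear (PhiBar R G k a) (Psi R G k a) (eq1 R G k a) (eq2 R G k a)⟩
  · refine ⟨1, ?_⟩
    rw [Units.val_one, one_mul]
    have hL : L = Lmat R G n k a := rfl
    rw [hL, det_Lmat R G n k a]
    refine Finset.prod_congr rfl (fun i _ => ?_)
    rw [zsmul_eq_mul]
    push_cast
    ring
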